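/- arXiv:1810.11507 — 2 statements merged into one kernel-verified Lean document; each statement's English description precedes it below -/
import Mathlib

section
/- Let H be symmetric positive definite with eigenvalues in [μ, L], g ∈ ℝᵈ, and suppose v satisfies ‖Hv - g‖ ≤ ε with ε ≤ β √(μ/L) ‖g‖ for some β ∈ [0,1). Then (1 - β)√(gᵀH⁻¹g) ≤ √(vᵀHv) ≤ (1 + β)√(gᵀH⁻¹g). -/
open scoped InnerProductSpace

private lemma csH {d : ℕ} (H : EuclideanSpace ℝ (Fin d) →L[ℝ] EuclideanSpace ℝ (Fin d))
    (hHsym : IsSelfAdjoint H) (hpsd : ∀ x, 0 ≤ ⟪H x, x⟫_ℝ)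
    (x y : EuclideanSpace ℝ (Fin d)) :
    ⟪H x, y⟫_ℝ ^ 2 ≤ ⟪H x, x⟫_ℝ * ⟪H y, y⟫_ℝ := by
  have hsym : ∀ a b : EuclideanSpace ℝ (Fin d), ⟪H a, b⟫_ℝ = ⟪H b, a⟫_ℝ := fun a b =>
    ((ContinuousLinearMap.isSelfAdjoint_iff_isSymmetric.mp hHsym) a b).trans
      (real_inner_comm _ _)
  have key : ∀ t : ℝ, 0 ≤ ⟪H y, y⟫_ℝ * (t * t) + (2 * ⟪H x, y⟫_ℝ) * t + ⟪H x, x⟫_ℝ := by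
    intro t
    have h := hpsd (x + t • y)
    have hx : ⟪H (x + t • y), x + t • y⟫_ℝ =
        ⟪H y, y⟫_ℝ * (t * t) + (2 * ⟪H x, y⟫_ℝ) * t + ⟪H x, x⟫_ℝ := by
      simp only [map_add, map_smul, inner_add_left, inner_add_right,
        real_inner_smul_left, real_inner_smul_right]
      rw [hsym y x]
      ring
    linarith [hx ▸ h]
  have := discrim_le_zero key
  rw [discrim] at this
  nlinarith

private lemma arith_sq (a t b A S : ℝ) (hA2 : A ^ 2 = a) (hS2 : S ^ 2 = t)
    (hb1 : -(A * S) ≤ b) (hb2 : b ≤ A * S) :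
    (A - S) ^ 2 ≤ a + 2 * b + t ∧ a + 2 * b + t ≤ (A + S) ^ 2 := by
  constructor <;> nlinarith

/-- If `H` is symmetric positive definite with eigenvalues in `[μ, L]`, `H w = g` (so
`w = H⁻¹g`), and `v` satisfies `‖Hv - g‖ ≤ ε` with `ε ≤ β √(μ/L) ‖g‖`, `β ∈ [0,1)`, then
`(1 - β) √(gᵀH⁻¹g) ≤ √(vᵀHv) ≤ (1 + β) √(gᵀH⁻¹g)`. -/
theorem stmt6 (d : ℕ)
    (H : EuclideanSpace ℝ (Fin d) →L[ℝ] EuclideanSpace ℝ (Fin d))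
    (hHsym : IsSelfAdjoint H)
    (μ L : ℝ) (hμ : 0 < μ) (hμL : μ ≤ L)
    (hlow : ∀ x, μ * ‖x‖ ^ 2 ≤ ⟪H x, x⟫_ℝ)
    (hhigh : ∀ x, ⟪H x, x⟫_ℝ ≤ L * ‖x‖ ^ 2)
    (g v w : EuclideanSpace ℝ (Fin d)) (hw : H w = g)
    (β ε : ℝ) (hβ0 : 0 ≤ β) (hβ1 : β < 1)
    (hε : ‖H v - g‖ ≤ ε) (hεsmall : ε ≤ β * Real.sqrt (μ / L) * ‖g‖) :
    (1 - β) * Real.sqrt ⟪g, w⟫_ℝ ≤ Real.sqrt ⟪v, H v⟫_ℝ ∧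
      Real.sqrt ⟪v, H v⟫_ℝ ≤ (1 + β) * Real.sqrt ⟪g, w⟫_ℝ := by
  have hL : 0 < L := lt_of_lt_of_le hμ hμL
  have hpsd : ∀ x, 0 ≤ ⟪H x, x⟫_ℝ := fun x =>
    le_trans (by positivity) (hlow x)
  have hsym : ∀ a b : EuclideanSpace ℝ (Fin d), ⟪H a, b⟫_ℝ = ⟪H b, a⟫_ℝ := fun a b =>
    ((ContinuousLinearMap.isSelfAdjoint_iff_isSymmetric.mp hHsym) a b).trans
      (real_inner_comm _ _)
  set α := ⟪H w, w⟫_ℝ with hα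
  have hgw : ⟪g, w⟫_ℝ = α := by rw [← hw]
  have hα0 : 0 ≤ α := hpsd w
  -- ‖g‖² ≤ L * α
  have hg2 : ‖g‖ ^ 2 ≤ L * α := by
    have h1 := csH H hHsym hpsd w (H w)
    have h2 : ⟪H (H w), H w⟫_ℝ ≤ L * ‖H w‖ ^ 2 := hhigh (H w)
    have h3 : ⟪H w, H w⟫_ℝ = ‖H w‖ ^ 2 := real_inner_self_eq_norm_sq (H w)
    rw [h3] at h1
    rcases eq_or_lt_of_le (sq_nonneg ‖H w‖) with h0 | h0
    · rw [hw] at h0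
      rw [← h0]
      positivity
    · have : ‖H w‖ ^ 2 ≤ L * α := by nlinarith
      rwa [hw] at this
  set δ := v - w with hδ
  set s := ⟪H δ, δ⟫_ℝ with hs
  have hs0 : 0 ≤ s := hpsd δ
  have hHδ : H δ = H v - g := by rw [hδ, map_sub, hw]
  have hε0 : 0 ≤ ε := le_trans (norm_nonneg _) hε
  have hsle : s ≤ ε * ‖δ‖ := by
    calc s = ⟪H v - g, δ⟫_ℝ := by rw [hs, hHδ]
    _ ≤ ‖H v - g‖ * ‖δ‖ := real_inner_le_norm _ _
    _ ≤ ε * ‖δ‖ := by gcongr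
  have hμδ : μ * ‖δ‖ ^ 2 ≤ s := hlow δ
  -- s ≤ ε² / μ
  have hsB : s ≤ ε ^ 2 / μ := by
    rw [le_div_iff₀ hμ]
    rcases eq_or_lt_of_le hs0 with h0 | h0
    · nlinarith
    · have h1 : s ^ 2 ≤ ε ^ 2 * ‖δ‖ ^ 2 := by nlinarith [norm_nonneg δ]
      nlinarith [sq_nonneg ε]
  have hsqrt_s : Real.sqrt s ≤ ε / Real.sqrt μ := by
    calc Real.sqrt s ≤ Real.sqrt (ε ^ 2 / μ) := Real.sqrt_le_sqrt hsB
    _ = ε / Real.sqrt μ := by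
        rw [Real.sqrt_div (sq_nonneg ε), Real.sqrt_sq hε0]
  -- ‖g‖ ≤ √L √α
  have hgle : ‖g‖ ≤ Real.sqrt L * Real.sqrt α := by
    rw [← Real.sqrt_mul hL.le]
    calc ‖g‖ = Real.sqrt (‖g‖ ^ 2) := (Real.sqrt_sq (norm_nonneg g)).symm
    _ ≤ _ := Real.sqrt_le_sqrt hg2
  -- √s ≤ β √α
  have hkey : Real.sqrt s ≤ β * Real.sqrt α := by
    refine hsqrt_s.trans ?_
    rw [div_le_iff₀ (Real.sqrt_pos.mpr hμ)]
    have hLs : (0:ℝ) < Real.sqrt L := Real.sqrt_pos.mpr hL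
    calc ε ≤ β * Real.sqrt (μ / L) * ‖g‖ := hεsmall
    _ = β * (Real.sqrt μ / Real.sqrt L) * ‖g‖ := by rw [Real.sqrt_div hμ.le]
    _ ≤ β * (Real.sqrt μ / Real.sqrt L) * (Real.sqrt L * Real.sqrt α) := by
        have : (0:ℝ) ≤ β * (Real.sqrt μ / Real.sqrt L) := by positivity
        exact mul_le_mul_of_nonneg_left hgle this
    _ = β * Real.sqrt α * Real.sqrt μ := by field_simp
  -- expansion
  have hexp : ⟪H v, v⟫_ℝ = α + 2 * ⟪H w, δ⟫_ℝ + s := by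
    have hv : v = w + δ := by rw [hδ]; abel
    rw [hv]
    simp only [map_add, inner_add_left, inner_add_right]
    rw [hsym δ w]
    ring
  have hcs := csH H hHsym hpsd w δ
  have hb : |⟪H w, δ⟫_ℝ| ≤ Real.sqrt α * Real.sqrt s := by
    calc |⟪H w, δ⟫_ℝ| = Real.sqrt (⟪H w, δ⟫_ℝ ^ 2) := (Real.sqrt_sq_eq_abs _).symm
    _ ≤ Real.sqrt (α * s) := Real.sqrt_le_sqrt hcs
    _ = Real.sqrt α * Real.sqrt s := Real.sqrt_mul hα0 s
  have hbabs := abs_le.mp hb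
  have hsa : Real.sqrt s ≤ Real.sqrt α := by
    refine hkey.trans ?_
    calc β * Real.sqrt α ≤ 1 * Real.sqrt α :=
          mul_le_mul_of_nonneg_right hβ1.le (Real.sqrt_nonneg α)
    _ = Real.sqrt α := one_mul _
  have hvv : ⟪v, H v⟫_ℝ = ⟪H v, v⟫_ℝ := real_inner_comm _ _
  have hA2 := Real.sq_sqrt hα0
  have hS2 := Real.sq_sqrt hs0
  obtain ⟨ha1, ha2⟩ := arith_sq α s ⟪H w, δ⟫_ℝ (Real.sqrt α) (Real.sqrt s)
    hA2 hS2 hbabs.1 hbabs.2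
  constructor
  · -- lower bound
    have h2 : (Real.sqrt α - Real.sqrt s) ^ 2 ≤ ⟪H v, v⟫_ℝ := by
      rw [hexp]; exact ha1
    have h3 : Real.sqrt α - Real.sqrt s ≤ Real.sqrt ⟪H v, v⟫_ℝ := by
      calc Real.sqrt α - Real.sqrt s
          = Real.sqrt ((Real.sqrt α - Real.sqrt s) ^ 2) :=
            (Real.sqrt_sq (by linarith)).symm
      _ ≤ _ := Real.sqrt_le_sqrt h2
    rw [hgw, hvv]
    have he : (1 - β) * Real.sqrt α = Real.sqrt α - β * Real.sqrt α := by ring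
    linarith only [h3, hkey, he]
  · -- upper bound
    have h1 : ⟪H v, v⟫_ℝ ≤ (Real.sqrt α + Real.sqrt s) ^ 2 := by
      rw [hexp]; exact ha2
    have h3 : Real.sqrt ⟪H v, v⟫_ℝ ≤ Real.sqrt α + Real.sqrt s := by
      calc Real.sqrt ⟪H v, v⟫_ℝ ≤ Real.sqrt ((Real.sqrt α + Real.sqrt s) ^ 2) :=
            Real.sqrt_le_sqrt h1
      _ = _ := Real.sqrt_sq (by positivity)
    rw [hgw, hvv]
    have he : (1 + β) * Real.sqrt α = Real.sqrt α + β * Real.sqrt α := by ring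
    linarith only [h3, hkey, he]
end

section
/- Let δ, β ∈ (0,1) with β ≤ 1/20, and let u, v ≥ 0 satisfy (1-β)u ≤ v ≤ (1+β)u. If v ≤ (1-β)√V for some V ∈ (0, 0.68²], then u ≤ 0.68 and ω*(u) ≤ V, where ω*(t) = -t - log(1-t). -/
lemma pow_le_exp' (x : ℝ) (n : ℕ) (hn : 0 < n) (h : 0 ≤ 1 + x / n) :
    (1 + x / n) ^ n ≤ Real.exp x := by
  have h1 : 1 + x / n ≤ Real.exp (x / n) := by
    have := Real.add_one_le_exp (x / n); linarith
  calc (1 + x / n) ^ n ≤ Real.exp (x / n) ^ n := pow_le_pow_left₀ h h1 n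
    _ = Real.exp (n * (x / n)) := (Real.exp_nat_mul _ n).symm
    _ = Real.exp x := by
        congr 1
        field_simp

lemma exp_big : (3.13035 : ℝ) ≤ Real.exp 1.1424 := by
  have h8 : ((1 : ℝ) + (0.1424 : ℝ) / (8:ℕ)) ^ (8:ℕ) ≤ Real.exp 0.1424 :=
    pow_le_exp' 0.1424 8 (by norm_num) (by norm_num)
  have he : (2.7182818283 : ℝ) < Real.exp 1 := Real.exp_one_gt_d9
  have hsplit : Real.exp (1.1424 : ℝ) = Real.exp 1 * Real.exp 0.1424 := by
    rw [← Real.exp_add]; norm_num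
  have hnum : ((1 : ℝ) + (0.1424 : ℝ) / (8:ℕ)) ^ (8:ℕ) ≥ 1.151582 := by
    push_cast; norm_num
  have hpos : (0:ℝ) < Real.exp 0.1424 := Real.exp_pos _
  rw [hsplit]
  nlinarith

lemma key (u : ℝ) (h0 : 0 ≤ u) (h1 : u ≤ 0.68) :
    (1 : ℝ) ≤ (1 - u) * Real.exp (u + u ^ 2) := by
  have h1u : (0:ℝ) < 1 - u := by linarith
  rcases le_or_gt u 0.45 with hc | hc
  · have hx : 0 ≤ 1 + (u + u ^ 2) / ((4:ℕ):ℝ) := by positivity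
    have hb := pow_le_exp' (u + u ^ 2) 4 (by norm_num) hx
    have hp : (1 : ℝ) ≤ (1 - u) * (1 + (u + u ^ 2) / ((4:ℕ):ℝ)) ^ 4 := by
      push_cast
      nlinarith [sq_nonneg u, sq_nonneg (u - 0.45), sq_nonneg (u*(u-0.45)), sq_nonneg (u^2*(u-0.45)), sq_nonneg (u^3*(u-0.45))]
    calc (1:ℝ) ≤ (1 - u) * (1 + (u + u ^ 2) / ((4:ℕ):ℝ)) ^ 4 := hp
      _ ≤ (1 - u) * Real.exp (u + u ^ 2) := mul_le_mul_of_nonneg_left hb h1u.le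
  · have hx : 0 ≤ 1 + (u + u ^ 2 - 1.1424) / ((4:ℕ):ℝ) := by push_cast; nlinarith
    have hb := pow_le_exp' (u + u ^ 2 - 1.1424) 4 (by norm_num) hx
    have hsplit : Real.exp (u + u ^ 2) = Real.exp (1.1424 : ℝ) * Real.exp (u + u ^ 2 - 1.1424) := by
      rw [← Real.exp_add]; ring_nf
    have hexp : 3.13035 * (1 + (u + u ^ 2 - 1.1424) / ((4:ℕ):ℝ)) ^ 4 ≤ Real.exp (u + u ^ 2) := by
      rw [hsplit]
      have hC := exp_big
      have hpos : (0:ℝ) < Real.exp (u + u ^ 2 - 1.1424) := Real.exp_pos _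
      nlinarith [pow_nonneg hx 4]
    have hp : (1 : ℝ) ≤ (1 - u) * (3.13035 * (1 + (u + u ^ 2 - 1.1424) / ((4:ℕ):ℝ)) ^ 4) := by
      push_cast
      nlinarith [mul_nonneg (sub_nonneg.2 hc.le) (sub_nonneg.2 h1), sq_nonneg (u - 0.68), sq_nonneg ((u-0.45)*(u-0.68)), sq_nonneg (u*(u-0.68)), sq_nonneg (u^2*(u-0.68)), sq_nonneg (u^3*(u-0.68))]
    calc (1:ℝ) ≤ (1 - u) * (3.13035 * (1 + (u + u ^ 2 - 1.1424) / ((4:ℕ):ℝ)) ^ 4) := hp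
      _ ≤ (1 - u) * Real.exp (u + u ^ 2) := mul_le_mul_of_nonneg_left hexp h1u.le

lemma omega_le_sq (u : ℝ) (h0 : 0 ≤ u) (h1 : u ≤ 0.68) :
    -u - Real.log (1 - u) ≤ u ^ 2 := by
  have h1u : (0:ℝ) < 1 - u := by linarith
  have hk := key u h0 h1
  have : Real.exp (-(u + u ^ 2)) ≤ 1 - u := by
    rw [Real.exp_neg]
    rw [inv_le_iff_one_le_mul₀ (Real.exp_pos _)] at *
    · linarith [mul_comm (1 - u) (Real.exp (u + u ^ 2))]
  have hlog : -(u + u ^ 2) ≤ Real.log (1 - u) :=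
    (Real.le_log_iff_exp_le h1u).mpr this
  linarith

/-- Practical stopping criterion: if `β ∈ (0,1)` with `β ≤ 1/20`, `0 ≤ u`, `0 ≤ v`,
`(1-β)u ≤ v ≤ (1+β)u`, and `v ≤ (1-β)√V` for some `V ∈ (0, 0.68²]`, then `u ≤ 0.68` and
`ω*(u) = -u - log(1-u) ≤ V`. -/
theorem stmt8 (β u v V : ℝ) (hβ0 : 0 < β) (hβ1 : β < 1) (hβ : β ≤ 1 / 20)
    (hu : 0 ≤ u) (hv : 0 ≤ v)
    (h1 : (1 - β) * u ≤ v) (h2 : v ≤ (1 + β) * u)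
    (hV0 : 0 < V) (hV : V ≤ 0.68 ^ 2)
    (hstop : v ≤ (1 - β) * Real.sqrt V) :
    u ≤ 0.68 ∧ -u - Real.log (1 - u) ≤ V := by
  have hb : (0:ℝ) < 1 - β := by linarith
  have husqrt : u ≤ Real.sqrt V := by
    have : (1 - β) * u ≤ (1 - β) * Real.sqrt V := le_trans h1 hstop
    exact le_of_mul_le_mul_left this hb
  have hsV : Real.sqrt V ≤ 0.68 := by
    have : Real.sqrt V ≤ Real.sqrt (0.68 ^ 2) := Real.sqrt_le_sqrt hV
    rwa [Real.sqrt_sq (by norm_num)] at this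
  have hu68 : u ≤ 0.68 := le_trans husqrt hsV
  refine ⟨hu68, ?_⟩
  have hsq : u ^ 2 ≤ V := by
    have := Real.sq_sqrt hV0.le
    nlinarith [Real.sqrt_nonneg V]
  linarith [omega_le_sq u hu hu68]
end
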